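/- The Lax–Oleinik operators are non-expansive with respect to localized sup norms: for u, v ∈ H(c), every x ∈ M and t > 0, |T⁻ₜu(x) − T⁻ₜv(x)| ≤ sup{|u(y) − v(y)| : d(x,y) ≤ K(c,t)}, where K(c,t) = t(A(0) + C(c + A(1) + 1)) depends only on c and t. -/

import Mathlib

open intervalIntegral

/-- A function `u` is dominated by `L + c`. -/
def Dominated {E : Type*} [NormedAddCommGroup E] [NormedSpace ℝ E]
    (L : E → E → ℝ) (c : ℝ) (u : E → ℝ) : Prop :=
  ∀ a b : ℝ, a ≤ b → ∀ γ γ' : ℝ → E,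
    (∀ s, HasDerivAt γ (γ' s) s) → Continuous γ' →
    u (γ b) - u (γ a) ≤ (∫ s in a..b, L (γ s) (γ' s)) + c * (b - a)

/-- The set of values `u (γ 0) + ∫₀ᵗ L(γ, γ')` over `C¹` curves `γ` with `γ t = x`. -/
def laxSet {E : Type*} [NormedAddCommGroup E] [NormedSpace ℝ E]
    (L : E → E → ℝ) (t : ℝ) (u : E → ℝ) (x : E) : Set ℝ :=
  {r | ∃ γ γ' : ℝ → E, (∀ s, HasDerivAt γ (γ' s) s) ∧ Continuous γ' ∧ γ t = x ∧
    r = u (γ 0) + ∫ s in (0:ℝ)..t, L (γ s) (γ' s)}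

/-- The Lax–Oleinik semigroup `T⁻ₜ u (x)`. -/
noncomputable def laxOleinik {E : Type*} [NormedAddCommGroup E] [NormedSpace ℝ E]
    (L : E → E → ℝ) (t : ℝ) (u : E → ℝ) (x : E) : ℝ :=
  sInf (laxSet L t u x)


open MeasureTheory UniformSpace Filter

lemma hasDerivAt_maxsq (x : ℝ) : HasDerivAt (fun y : ℝ => max y 0 ^ 2) (2 * max x 0) x := by
  rcases lt_trichotomy x 0 with h | h | h
  · have hx : max x 0 = 0 := max_eq_right h.le
    rw [hx, mul_zero]
    apply (hasDerivAt_const x (0:ℝ)).congr_of_eventuallyEq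
    filter_upwards [Iio_mem_nhds h] with y hy
    simp [max_eq_right (le_of_lt (Set.mem_Iio.mp hy))]
  · subst h
    rw [hasDerivAt_iff_isLittleO, Asymptotics.isLittleO_iff]
    intro c hc
    filter_upwards [Metric.ball_mem_nhds (0:ℝ) hc] with y hy
    rw [Metric.mem_ball, Real.dist_eq, sub_zero] at hy
    have h1 : |max y 0| ≤ |y| := by
      rcases le_or_gt y 0 with h2 | h2
      · simp [max_eq_right h2]
      · simp [max_eq_left h2.le, abs_of_pos h2, le_abs_self]
    have h2 : ‖max y 0 ^ 2 - max (0:ℝ) 0 ^ 2 - (y - 0) • (2 * max (0:ℝ) 0)‖ = |max y 0| ^ 2 := by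
      simp [abs_pow, sq_abs]
    rw [h2]
    have : |max y 0| ^ 2 ≤ |y| * |y| := by
      rw [sq]
      exact mul_le_mul h1 h1 (abs_nonneg _) (abs_nonneg _)
    calc |max y 0| ^ 2 ≤ |y| * |y| := this
      _ ≤ c * ‖y - 0‖ := by
          rw [Real.norm_eq_abs, sub_zero]
          exact mul_le_mul hy.le le_rfl (abs_nonneg _) (le_of_lt hc)
  · have hx : max x 0 = x := max_eq_left h.le
    rw [hx]
    have hp : HasDerivAt (fun y : ℝ => y ^ 2) (2 * x) x := by
      simpa using hasDerivAt_pow 2 x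
    apply hp.congr_of_eventuallyEq
    filter_upwards [Ioi_mem_nhds h] with y hy
    simp [max_eq_left (le_of_lt (Set.mem_Ioi.mp hy))]

lemma dist_le_int {E : Type*} [NormedAddCommGroup E] [NormedSpace ℝ E]
    (γ γ' : ℝ → E) (hd : ∀ s, HasDerivAt γ (γ' s) s) (hc : Continuous γ') {t : ℝ} (ht : 0 ≤ t) :
    ‖γ t - γ 0‖ ≤ ∫ s in (0:ℝ)..t, ‖γ' s‖ := by
  have hd' : ∀ s, HasDerivAt (fun τ => (γ τ : Completion E)) ((γ' s : E) : Completion E) s := by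
    intro s
    have h := (UniformSpace.Completion.toComplL (𝕜 := ℝ) (E := E)).hasFDerivAt.comp_hasDerivAt s (hd s)
    exact h
  have hci : Continuous fun s => ((γ' s : E) : Completion E) :=
    (UniformSpace.Completion.continuous_coe E).comp hc
  have heq : ∫ s in (0:ℝ)..t, ((γ' s : E) : Completion E)
      = ((γ t - γ 0 : E) : Completion E) := by
    rw [UniformSpace.Completion.coe_sub]
    exact integral_eq_sub_of_hasDerivAt (fun s _ => hd' s) (hci.intervalIntegrable _ _)
  calc ‖γ t - γ 0‖ = ‖((γ t - γ 0 : E) : Completion E)‖ :=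
        (UniformSpace.Completion.norm_coe _).symm
    _ = ‖∫ s in (0:ℝ)..t, ((γ' s : E) : Completion E)‖ := by rw [heq]
    _ ≤ ∫ s in (0:ℝ)..t, ‖((γ' s : E) : Completion E)‖ :=
        intervalIntegral.norm_integral_le_integral_norm ht
    _ = ∫ s in (0:ℝ)..t, ‖γ' s‖ := by simp [UniformSpace.Completion.norm_coe]

lemma bad_small {f : ℝ → ℝ} {a b : ℝ} (hab : a ≤ b)
    (h : ¬ IntervalIntegrable f volume a b) (n : ℕ) :
    ∃ p q, a ≤ p ∧ p ≤ q ∧ q ≤ b ∧ q - p = (b - a) / 2 ^ n ∧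
      ¬ IntervalIntegrable f volume p q := by
  induction n with
  | zero => exact ⟨a, b, le_rfl, hab, le_rfl, by ring, h⟩
  | succ n ih =>
    obtain ⟨p, q, hap, hpq, hqb, hlen, hni⟩ := ih
    set m := (p + q) / 2 with hm
    have hpm : p ≤ m := by rw [hm]; linarith
    have hmq : m ≤ q := by rw [hm]; linarith
    by_cases h1 : IntervalIntegrable f volume p m
    · by_cases h2 : IntervalIntegrable f volume m q
      · exact absurd (h1.trans h2) hni
      · refine ⟨m, q, hap.trans hpm, hmq, hqb, ?_, h2⟩
        rw [hm, pow_succ, ← div_div, ← hlen]; ring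
    · refine ⟨p, m, hap, hpm, hmq.trans hqb, ?_, h1⟩
      rw [hm, pow_succ, ← div_div, ← hlen]; ring

section
variable {E : Type*} [NormedAddCommGroup E] [NormedSpace ℝ E] (L : E → E → ℝ) (c : ℝ)

lemma teleport_step {γ γ' : ℝ → E} (hd : ∀ s, HasDerivAt γ (γ' s) s) (hc : Continuous γ')
    {p q : ℝ} (hpq : p < q)
    (hni : ¬ IntervalIntegrable (fun s => L (γ s) (γ' s)) volume p q)
    {w : E → ℝ} (hw : Dominated L c w) (y z : E) :
    w z - w y ≤ c * (3 * (q - p)) := by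
  set h : ℝ := q - p with hh
  have hh0 : 0 < h := by rw [hh]; linarith
  set cl : ℝ → ℝ := fun τ => max p (min q τ) with hcl
  have hclp : ∀ τ : ℝ, τ ≤ p → cl τ = p := by
    intro τ hτ
    rw [hcl]; simp only []
    rw [min_eq_right (hτ.trans hpq.le), max_eq_left hτ]
  have hclm : ∀ τ : ℝ, p ≤ τ → τ ≤ q → cl τ = τ := by
    intro τ h1 h2
    rw [hcl]; simp only []
    rw [min_eq_right h2, max_eq_right h1]
  have hclq : ∀ τ : ℝ, q ≤ τ → cl τ = q := by
    intro τ hτ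
    rw [hcl]; simp only []
    rw [min_eq_left hτ, max_eq_right hpq.le]
  set W₁ : E := (h ^ 2)⁻¹ • (y - γ p + h • γ' p) with hW₁
  set W₂ : E := (h ^ 2)⁻¹ • (z - γ q - h • γ' q) with hW₂
  set e1 : ℝ → E := fun τ => γ (cl τ) + (τ - cl τ) • γ' (cl τ) with he1
  set δ : ℝ → E := fun τ => e1 τ + max (p - τ) 0 ^ 2 • W₁ + max (τ - q) 0 ^ 2 • W₂ with hδ
  set δ' : ℝ → E := fun τ => γ' (cl τ) + (2 * max (p - τ) 0 * (-1)) • W₁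
      + (2 * max (τ - q) 0) • W₂ with hδ'
  -- derivative of e1
  have He1 : ∀ τ, HasDerivAt e1 (γ' (cl τ)) τ := by
    intro τ
    rcases lt_trichotomy τ p with h1 | h1 | h1
    · have base : HasDerivAt (fun τ' : ℝ => γ p + (τ' - p) • γ' p) (γ' p) τ := by
        have h2 := ((hasDerivAt_id τ).sub_const p).smul_const (γ' p)
        rw [one_smul] at h2
        exact h2.const_add (γ p)
      rw [hclp τ h1.le]
      apply base.congr_of_eventuallyEq
      filter_upwards [Iio_mem_nhds h1] with τ' hτ'
      rw [he1]; simp only []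
      rw [hclp τ' (le_of_lt (Set.mem_Iio.mp hτ'))]
    · subst h1
      rw [hclp τ le_rfl, hasDerivAt_iff_isLittleO]
      have he1p : e1 τ = γ τ := by
        rw [he1]; simp only []
        rw [hclp τ le_rfl, sub_self, zero_smul, add_zero]
      rw [he1p]
      have hR := hasDerivAt_iff_isLittleO.mp (hd τ)
      refine Asymptotics.IsBigO.trans_isLittleO ?_ hR
      rw [Asymptotics.isBigO_iff]
      refine ⟨1, ?_⟩
      filter_upwards [Iio_mem_nhds hpq] with τ' hτ'
      rcases le_or_gt τ' τ with h2 | h2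
      · have : e1 τ' = γ τ + (τ' - τ) • γ' τ := by
          rw [he1]; simp only []
          rw [hclp τ' h2]
        rw [this]
        simp
      · have : e1 τ' = γ τ' := by
          rw [he1]; simp only []
          rw [hclm τ' h2.le (le_of_lt (Set.mem_Iio.mp hτ')), sub_self, zero_smul, add_zero]
        rw [this, one_mul]
    rcases lt_trichotomy τ q with h2 | h2 | h2
    · have hmid : cl τ = τ := hclm τ h1.le h2.le
      rw [hmid]
      apply (hd τ).congr_of_eventuallyEq
      filter_upwards [Ioo_mem_nhds h1 h2] with τ' hτ'
      rw [he1]; simp only []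
      rw [hclm τ' hτ'.1.le hτ'.2.le, sub_self, zero_smul, add_zero]
    · subst h2
      rw [hclq τ le_rfl, hasDerivAt_iff_isLittleO]
      have he1q : e1 τ = γ τ := by
        rw [he1]; simp only []
        rw [hclq τ le_rfl, sub_self, zero_smul, add_zero]
      rw [he1q]
      have hR := hasDerivAt_iff_isLittleO.mp (hd τ)
      refine Asymptotics.IsBigO.trans_isLittleO ?_ hR
      rw [Asymptotics.isBigO_iff]
      refine ⟨1, ?_⟩
      filter_upwards [Ioi_mem_nhds hpq] with τ' hτ'
      rcases le_or_gt τ' τ with h2 | h2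
      · have : e1 τ' = γ τ' := by
          rw [he1]; simp only []
          rw [hclm τ' (le_of_lt (Set.mem_Ioi.mp hτ')) h2, sub_self, zero_smul, add_zero]
        rw [this, one_mul]
      · have : e1 τ' = γ τ + (τ' - τ) • γ' τ := by
          rw [he1]; simp only []
          rw [hclq τ' h2.le]
        rw [this]
        simp
    · have base : HasDerivAt (fun τ' : ℝ => γ q + (τ' - q) • γ' q) (γ' q) τ := by
        have h3 := ((hasDerivAt_id τ).sub_const q).smul_const (γ' q)
        rw [one_smul] at h3
        exact h3.const_add (γ q)
      rw [hclq τ h2.le]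
      apply base.congr_of_eventuallyEq
      filter_upwards [Ioi_mem_nhds h2] with τ' hτ'
      rw [he1]; simp only []
      rw [hclq τ' (le_of_lt (Set.mem_Ioi.mp hτ'))]
  -- derivative of bump terms
  have Hd2 : ∀ τ : ℝ, HasDerivAt (fun τ : ℝ => max (p - τ) 0 ^ 2 • W₁)
      ((2 * max (p - τ) 0 * (-1)) • W₁) τ := by
    intro τ
    have hin : HasDerivAt (fun τ : ℝ => p - τ) (-1) τ := by
      have := (hasDerivAt_const τ p).sub (hasDerivAt_id τ)
      rwa [zero_sub] at this
    exact ((hasDerivAt_maxsq (p - τ)).comp τ hin).smul_const W₁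
  have Hd3 : ∀ τ : ℝ, HasDerivAt (fun τ : ℝ => max (τ - q) 0 ^ 2 • W₂)
      ((2 * max (τ - q) 0) • W₂) τ := by
    intro τ
    have hin : HasDerivAt (fun τ : ℝ => τ - q) 1 τ := (hasDerivAt_id τ).sub_const q
    have := ((hasDerivAt_maxsq (τ - q)).comp τ hin).smul_const W₂
    rwa [mul_one] at this
  have Hδ : ∀ τ, HasDerivAt δ (δ' τ) τ := fun τ => ((He1 τ).add (Hd2 τ)).add (Hd3 τ)
  have Hcont : Continuous δ' := by
    have hclc : Continuous cl := continuous_const.max (continuous_const.min continuous_id)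
    refine ((hc.comp hclc).add (Continuous.smul ?_ continuous_const)).add
      (Continuous.smul ?_ continuous_const)
    · exact (continuous_const.mul ((continuous_const.sub continuous_id).max continuous_const)).mul
        continuous_const
    · exact continuous_const.mul ((continuous_id.sub continuous_const).max continuous_const)
  -- endpoint values
  have hsmul₁ : (h ^ 2 : ℝ) • W₁ = y - γ p + h • γ' p := by
    rw [hW₁, smul_smul, mul_inv_cancel₀ (pow_ne_zero 2 hh0.ne'), one_smul]
  have hsmul₂ : (h ^ 2 : ℝ) • W₂ = z - γ q - h • γ' q := by
    rw [hW₂, smul_smul, mul_inv_cancel₀ (pow_ne_zero 2 hh0.ne'), one_smul]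
  have hδy : δ (p - h) = y := by
    rw [hδ, he1]; simp only []
    rw [hclp (p - h) (by linarith)]
    have e2 : p - (p - h) = h := by ring
    have e3 : (p - h) - q = -(h + (q - p)) := by ring
    rw [e2, e3, max_eq_left hh0.le, max_eq_right (by linarith)]
    have e4 : ((0:ℝ)) ^ 2 • W₂ = 0 := by norm_num
    rw [e4, add_zero, hsmul₁]
    have e5 : (p - h) - p = -h := by ring
    rw [e5, neg_smul]
    abel
  have hδz : δ (q + h) = z := by
    rw [hδ, he1]; simp only []
    rw [hclq (q + h) (by linarith)]
    have e2 : (q + h) - q = h := by ring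
    have e3 : p - (q + h) = -((q - p) + h) := by ring
    rw [e2, e3, max_eq_left hh0.le, max_eq_right (by linarith)]
    have e4 : ((0:ℝ)) ^ 2 • W₁ = 0 := by norm_num
    rw [e4, add_zero, hsmul₂]
    abel
  -- integrand agrees with that of γ on the window
  have hEq : Set.EqOn (fun s => L (δ s) (δ' s)) (fun s => L (γ s) (γ' s)) (Set.uIoc p q) := by
    intro τ hτ
    rw [Set.uIoc_of_le hpq.le] at hτ
    obtain ⟨h1, h2⟩ := hτ
    have hm : cl τ = τ := hclm τ h1.le h2
    have e2 : max (p - τ) 0 = 0 := max_eq_right (by linarith)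
    have e3 : max (τ - q) 0 = 0 := max_eq_right (by linarith)
    have hδτ : δ τ = γ τ := by
      rw [hδ, he1]; simp only []
      rw [hm, e2, e3, sub_self, zero_smul, add_zero]
      norm_num
    have hδ'τ : δ' τ = γ' τ := by
      rw [hδ']; simp only []
      rw [hm, e2, e3]
      norm_num
    simp only []
    rw [hδτ, hδ'τ]
  have hni2 : ¬ IntervalIntegrable (fun s => L (δ s) (δ' s)) volume (p - h) (q + h) := by
    intro hI
    apply hni
    have hmem1 : p ∈ Set.uIcc (p - h) (q + h) := by
      rw [Set.uIcc_of_le (by linarith)]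
      exact ⟨by linarith, by linarith⟩
    have hmem2 : q ∈ Set.uIcc (p - h) (q + h) := by
      rw [Set.uIcc_of_le (by linarith)]
      exact ⟨by linarith, by linarith⟩
    have h1 := hI.mono_set (Set.uIcc_subset_uIcc hmem1 hmem2)
    rw [intervalIntegrable_iff] at h1 ⊢
    exact h1.congr_fun hEq measurableSet_uIoc
  have hfin := hw (p - h) (q + h) (by linarith) δ δ' Hδ Hcont
  rw [hδy, hδz, intervalIntegral.integral_undef hni2, zero_add] at hfin
  have : (q + h) - (p - h) = 3 * (q - p) := by rw [hh]; ring
  rwa [this] at hfin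

lemma teleport {γ γ' : ℝ → E} (hd : ∀ s, HasDerivAt γ (γ' s) s) (hc : Continuous γ')
    {a b : ℝ} (hab : a ≤ b)
    (hni : ¬ IntervalIntegrable (fun s => L (γ s) (γ' s)) volume a b)
    {w : E → ℝ} (hw : Dominated L c w) (y z : E) : w z ≤ w y := by
  have key : ∀ n : ℕ, w z - w y ≤ c * (3 * ((b - a) / 2 ^ n)) := by
    intro n
    obtain ⟨p, q, hap, hpq, hqb, hlen, hni'⟩ := bad_small hab hni n
    have hba : a < b := by
      rcases eq_or_lt_of_le hab with h1 | h1
      · exfalso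
        apply hni
        rw [intervalIntegrable_iff, ← h1, Set.uIoc_of_le le_rfl, Set.Ioc_self]
        exact integrableOn_empty
      · exact h1
    have hpq' : p < q := by
      have h2 : (0:ℝ) < (b - a) / 2 ^ n := div_pos (by linarith) (by positivity)
      linarith
    have := teleport_step L c hd hc hpq' hni' hw y z
    rwa [hlen] at this
  have hT : Tendsto (fun n : ℕ => c * (3 * ((b - a) / 2 ^ n))) atTop (nhds 0) := by
    have h2 : Tendsto (fun n : ℕ => ((1:ℝ)/2) ^ n) atTop (nhds 0) :=
      tendsto_pow_atTop_nhds_zero_of_lt_one (by norm_num) (by norm_num)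
    have heq : (fun n : ℕ => c * (3 * ((b - a) / 2 ^ n)))
        = fun n : ℕ => (c * (3 * (b - a))) * ((1/2) ^ n) := by
      funext n
      rw [div_pow, one_pow]
      ring
    rw [heq]
    simpa using h2.const_mul (c * (3 * (b - a)))
  have hle : w z - w y ≤ 0 := ge_of_tendsto hT (Filter.Eventually.of_forall key)
  linarith

end

section
variable {E : Type*} [NormedAddCommGroup E] [NormedSpace ℝ E] (L : E → E → ℝ) (c : ℝ) (A : ℝ → ℝ)

lemma cA1_nonneg (hA : ∀ R : ℝ, 0 ≤ R → ∀ x v : E, ‖v‖ ≤ R → L x v ≤ A R)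
    {w : E → ℝ} (hw : Dominated L c w) : 0 ≤ c + A 1 := by
  have h := hw 0 1 zero_le_one (fun _ => 0) (fun _ => 0)
    (fun s => hasDerivAt_const s 0) continuous_const
  rw [intervalIntegral.integral_const] at h
  have h2 : L (0 : E) 0 ≤ A 1 := hA 1 zero_le_one 0 0 (by simp)
  simp at h
  linarith

lemma lip (hA : ∀ R : ℝ, 0 ≤ R → ∀ x v : E, ‖v‖ ≤ R → L x v ≤ A R)
    (h0 : 0 ≤ c + A 1) {w : E → ℝ} (hw : Dominated L c w) (y z : E) :
    w z - w y ≤ (c + A 1) * ‖z - y‖ := by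
  by_cases hzy : z = y
  · subst hzy; simp [mul_nonneg h0 (norm_nonneg _)]
  have hd0 : 0 < ‖z - y‖ := norm_pos_iff.mpr (sub_ne_zero.mpr hzy)
  set d : ℝ := ‖z - y‖ with hdd
  set w₀ : E := d⁻¹ • (z - y) with hw₀def
  have hw₀ : ‖w₀‖ = 1 := by
    rw [hw₀def, norm_smul, norm_inv, Real.norm_eq_abs, abs_of_pos hd0, ← hdd,
      inv_mul_cancel₀ hd0.ne']
  set γ : ℝ → E := fun s => y + s • w₀ with hγdef
  set γ' : ℝ → E := fun _ => w₀ with hγ'def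
  have hdγ : ∀ s, HasDerivAt γ (γ' s) s := by
    intro s
    have h1 := (hasDerivAt_id s).smul_const w₀
    rw [one_smul] at h1
    exact h1.const_add y
  have hγ0 : γ 0 = y := by rw [hγdef]; simp
  have hγd : γ d = z := by
    rw [hγdef]; simp only []
    rw [hw₀def, smul_smul, mul_inv_cancel₀ hd0.ne', one_smul]
    abel
  by_cases hint : IntervalIntegrable (fun s => L (γ s) (γ' s)) volume 0 d
  · have hdom := hw 0 d hd0.le γ γ' hdγ (by rw [hγ'def]; exact continuous_const)
    rw [hγ0, hγd] at hdom
    have hbound : (∫ s in (0:ℝ)..d, L (γ s) (γ' s)) ≤ ∫ s in (0:ℝ)..d, A 1 :=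
      integral_mono_on hd0.le hint intervalIntegrable_const
        (fun s _ => hA 1 zero_le_one _ _ (le_of_eq hw₀))
    rw [intervalIntegral.integral_const, smul_eq_mul, sub_zero] at hbound
    have : (c + A 1) * d = d * A 1 + c * (d - 0) := by ring
    linarith
  · have h1 := teleport L c hdγ (by rw [hγ'def]; exact continuous_const) hd0.le hint hw y z
    have h2 : 0 ≤ (c + A 1) * d := mul_nonneg h0 hd0.le
    linarith

lemma laxSet_mem_const (t : ℝ) (x : E) (w : E → ℝ) :
    w x + t * L x 0 ∈ laxSet L t w x := by
  refine ⟨fun _ => x, fun _ => 0, fun s => hasDerivAt_const s x, continuous_const, rfl, ?_⟩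
  rw [intervalIntegral.integral_const]
  simp [smul_eq_mul]

lemma laxSet_lb {t : ℝ} (ht : 0 ≤ t) (x : E) {w : E → ℝ} (hw : Dominated L c w) :
    ∀ r ∈ laxSet L t w x, w x - c * t ≤ r := by
  rintro r ⟨γ, γ', hd, hc, hγt, rfl⟩
  have h := hw 0 t ht γ γ' hd hc
  rw [hγt] at h
  have h2 : c * (t - 0) = c * t := by ring
  rw [h2] at h
  linarith

lemma laxSet_bddBelow {t : ℝ} (ht : 0 ≤ t) (x : E) {w : E → ℝ} (hw : Dominated L c w) :
    BddBelow (laxSet L t w x) := ⟨w x - c * t, fun r hr => laxSet_lb L c ht x hw r hr⟩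

lemma laxOleinik_le (hA : ∀ R : ℝ, 0 ≤ R → ∀ x v : E, ‖v‖ ≤ R → L x v ≤ A R)
    {t : ℝ} (ht : 0 ≤ t) (x : E) {w : E → ℝ} (hw : Dominated L c w) :
    laxOleinik L t w x ≤ w x + t * A 0 := by
  have h1 := csInf_le (laxSet_bddBelow L c ht x hw) (laxSet_mem_const L t x w)
  have h2 : L x 0 ≤ A 0 := hA 0 le_rfl x 0 (by simp)
  have h3 : t * L x 0 ≤ t * A 0 := mul_le_mul_of_nonneg_left h2 ht
  unfold laxOleinik
  linarith

end

section
variable {E : Type*} [NormedAddCommGroup E] [NormedSpace ℝ E]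

lemma key_onesided
    (L : E → E → ℝ) (c : ℝ) (A C : ℝ → ℝ)
    (hA : ∀ R : ℝ, 0 ≤ R → ∀ x v : E, ‖v‖ ≤ R → L x v ≤ A R)
    (hC : ∀ K : ℝ, 0 ≤ K → ∀ x v : E, K * ‖v‖ - C K ≤ L x v)
    (u v : E → ℝ) (hu : Dominated L c u) (hv : Dominated L c v)
    (t : ℝ) (ht : 0 < t) (x : E) :
    laxOleinik L t u x - laxOleinik L t v x ≤
      sSup {r : ℝ | ∃ y : E, dist x y ≤ t * (A 0 + C (c + A 1 + 1)) ∧ r = |u y - v y|} := by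
  have hcA1 : 0 ≤ c + A 1 := cA1_nonneg L c A hA hu
  set K : ℝ := t * (A 0 + C (c + A 1 + 1)) with hKdef
  have hK'0 : (0:ℝ) ≤ c + A 1 + 1 := by linarith
  have hACK : 0 ≤ A 0 + C (c + A 1 + 1) := by
    have h1 := hC (c + A 1 + 1) hK'0 x 0
    have h2 : L x 0 ≤ A 0 := hA 0 le_rfl x 0 (by simp)
    simp only [norm_zero, mul_zero, zero_sub] at h1
    linarith
  have hK0 : 0 ≤ K := mul_nonneg ht.le hACK
  set S : Set ℝ := {r : ℝ | ∃ y : E, dist x y ≤ K ∧ r = |u y - v y|} with hSdef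
  have hmem0 : |u x - v x| ∈ S := ⟨x, by simp [hK0], rfl⟩
  have hbddS : BddAbove S := by
    refine ⟨|u x - v x| + 2 * ((c + A 1) * K), ?_⟩
    rintro r ⟨y, hy, rfl⟩
    have hxy : ‖y - x‖ ≤ K := by rw [← dist_eq_norm y x, dist_comm]; exact hy
    have hyx : ‖x - y‖ ≤ K := by rw [norm_sub_rev]; exact hxy
    have l1 : u y - u x ≤ (c + A 1) * K :=
      le_trans (lip L c A hA hcA1 hu x y) (mul_le_mul_of_nonneg_left hxy hcA1)
    have l2 : u x - u y ≤ (c + A 1) * K :=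
      le_trans (lip L c A hA hcA1 hu y x) (mul_le_mul_of_nonneg_left hyx hcA1)
    have l3 : v y - v x ≤ (c + A 1) * K :=
      le_trans (lip L c A hA hcA1 hv x y) (mul_le_mul_of_nonneg_left hxy hcA1)
    have l4 : v x - v y ≤ (c + A 1) * K :=
      le_trans (lip L c A hA hcA1 hv y x) (mul_le_mul_of_nonneg_left hyx hcA1)
    have h5 := le_abs_self (u x - v x)
    have h6 := neg_abs_le (u x - v x)
    rw [abs_le]
    constructor <;> linarith
  have H : ∀ ε : ℝ, 0 < ε →
      laxOleinik L t u x - laxOleinik L t v x ≤ sSup S + (1 + 2 * (c + A 1)) * ε := by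
    intro ε hε
    have hne : (laxSet L t v x).Nonempty := ⟨_, laxSet_mem_const L t x v⟩
    obtain ⟨r, hrmem, hrlt⟩ := exists_lt_of_csInf_lt hne
      (lt_add_of_pos_right (sInf (laxSet L t v x)) hε)
    obtain ⟨γ, γ', hdγ, hcγ, hγt, rfl⟩ := hrmem
    set I : ℝ := ∫ s in (0:ℝ)..t, L (γ s) (γ' s) with hIdef
    have hTu : sInf (laxSet L t u x) ≤ u (γ 0) + I :=
      csInf_le (laxSet_bddBelow L c ht.le x hu) ⟨γ, γ', hdγ, hcγ, hγt, rfl⟩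
    have hclaim : u (γ 0) - v (γ 0) ≤ sSup S + 2 * ((c + A 1) * ε) := by
      by_cases hint : IntervalIntegrable (fun s => L (γ s) (γ' s)) volume 0 t
      · -- integrable case: the endpoint is within K + ε of x
        set D : ℝ := ‖x - γ 0‖ with hDdef
        have hD : D ≤ K + ε := by
          have harc : D ≤ ∫ s in (0:ℝ)..t, ‖γ' s‖ := by
            have h1 := dist_le_int γ γ' hdγ hcγ ht.le
            rwa [hγt] at h1
          have hlow : (∫ s in (0:ℝ)..t, ((c + A 1 + 1) * ‖γ' s‖ - C (c + A 1 + 1))) ≤ I := by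
            refine integral_mono_on ht.le ?_ hint (fun s _ => hC (c + A 1 + 1) hK'0 _ _)
            exact ((continuous_const.mul hcγ.norm).sub continuous_const).intervalIntegrable _ _
          have hsplit : (∫ s in (0:ℝ)..t, ((c + A 1 + 1) * ‖γ' s‖ - C (c + A 1 + 1)))
              = (c + A 1 + 1) * (∫ s in (0:ℝ)..t, ‖γ' s‖) - C (c + A 1 + 1) * t := by
            rw [intervalIntegral.integral_sub (f := fun s => (c + A 1 + 1) * ‖γ' s‖)
                ((continuous_const.mul hcγ.norm).intervalIntegrable _ _)
                intervalIntegrable_const,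
              intervalIntegral.integral_const_mul, intervalIntegral.integral_const,
              smul_eq_mul, sub_zero, mul_comm t]
          have hJ : (c + A 1 + 1) * D ≤ (c + A 1 + 1) * ∫ s in (0:ℝ)..t, ‖γ' s‖ :=
            mul_le_mul_of_nonneg_left harc hK'0
          have hub : v (γ 0) + I < v x + t * A 0 + ε := by
            have h1 := laxOleinik_le L c A hA ht.le x hv
            have h1' : sInf (laxSet L t v x) ≤ v x + t * A 0 := h1
            linarith
          have hlip : v x - v (γ 0) ≤ (c + A 1) * D := lip L c A hA hcA1 hv (γ 0) x
          have hKexp : K = t * A 0 + C (c + A 1 + 1) * t := by rw [hKdef]; ring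
          have hDrel : (c + A 1 + 1) * D - (c + A 1) * D = D := by ring
          linarith
        by_cases hDK : D ≤ K
        · have hmemP : |u (γ 0) - v (γ 0)| ∈ S := ⟨γ 0, by rw [dist_eq_norm]; exact hDK, rfl⟩
          have h1 := le_csSup hbddS hmemP
          have h2 := le_abs_self (u (γ 0) - v (γ 0))
          have h3 : 0 ≤ 2 * ((c + A 1) * ε) := by
            have := mul_nonneg hcA1 hε.le; linarith
          linarith
        · push_neg at hDK
          have hD0 : 0 < D := lt_of_le_of_lt hK0 hDK
          set P : E := x + (K / D) • (γ 0 - x) with hPdef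
          have hθ0 : 0 ≤ K / D := div_nonneg hK0 hD0.le
          have hθ1 : K / D ≤ 1 := (div_le_one hD0).mpr hDK.le
          have hγx : ‖γ 0 - x‖ = D := by rw [norm_sub_rev]
          have hPx : dist x P = K := by
            have h1 : x - P = -((K / D) • (γ 0 - x)) := by rw [hPdef]; abel
            rw [dist_eq_norm, h1, norm_neg, norm_smul, Real.norm_eq_abs, abs_of_nonneg hθ0,
              hγx, div_mul_cancel₀ _ hD0.ne']
          have hPmem : |u P - v P| ∈ S := ⟨P, le_of_eq hPx, rfl⟩
          have hPγ : ‖γ 0 - P‖ = D - K := by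
            have h1 : γ 0 - P = (1 - K / D) • (γ 0 - x) := by
              rw [hPdef, sub_smul, one_smul]; abel
            rw [h1, norm_smul, Real.norm_eq_abs, abs_of_nonneg (by linarith), hγx,
              sub_mul, one_mul, div_mul_cancel₀ _ hD0.ne']
          have l1 : u (γ 0) - u P ≤ (c + A 1) * ‖γ 0 - P‖ := lip L c A hA hcA1 hu P (γ 0)
          have l2 : v P - v (γ 0) ≤ (c + A 1) * ‖γ 0 - P‖ := by
            have := lip L c A hA hcA1 hv (γ 0) P
            rwa [norm_sub_rev] at this
          have l3 : u P - v P ≤ sSup S := le_trans (le_abs_self _) (le_csSup hbddS hPmem)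
          have hdk : ‖γ 0 - P‖ ≤ ε := by rw [hPγ]; linarith
          have l4 : (c + A 1) * ‖γ 0 - P‖ ≤ (c + A 1) * ε := mul_le_mul_of_nonneg_left hdk hcA1
          linarith
      · -- non-integrable case: all dominated functions are constant
        have h1 : u (γ 0) ≤ u x := teleport L c hdγ hcγ ht.le hint hu x (γ 0)
        have h2 : v x ≤ v (γ 0) := teleport L c hdγ hcγ ht.le hint hv (γ 0) x
        have h3 : u x - v x ≤ sSup S := le_trans (le_abs_self _) (le_csSup hbddS hmem0)
        have h4 : 0 ≤ 2 * ((c + A 1) * ε) := by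
          have := mul_nonneg hcA1 hε.le; linarith
        linarith
    have hexp : (1 + 2 * (c + A 1)) * ε = ε + 2 * ((c + A 1) * ε) := by ring
    have hTv : sInf (laxSet L t v x) > v (γ 0) + I - ε := by linarith
    unfold laxOleinik
    linarith
  refine le_of_forall_pos_le_add (fun ε' hε' => ?_)
  have hden : (0:ℝ) < 1 + 2 * (c + A 1) := by linarith
  have h1 := H (ε' / (1 + 2 * (c + A 1))) (div_pos hε' hden)
  rw [mul_div_cancel₀ _ hden.ne'] at h1
  exact h1

theorem laxOleinik_nonexpansive_localized'
    (L : E → E → ℝ) (c : ℝ) (A C : ℝ → ℝ)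
    (hA : ∀ R : ℝ, 0 ≤ R → ∀ x v : E, ‖v‖ ≤ R → L x v ≤ A R)
    (hC : ∀ K : ℝ, 0 ≤ K → ∀ x v : E, K * ‖v‖ - C K ≤ L x v)
    (u v : E → ℝ) (hu : Dominated L c u) (hv : Dominated L c v)
    (t : ℝ) (ht : 0 < t) (x : E) :
    |laxOleinik L t u x - laxOleinik L t v x| ≤
      sSup {r : ℝ | ∃ y : E, dist x y ≤ t * (A 0 + C (c + A 1 + 1)) ∧ r = |u y - v y|} := by
  rw [abs_sub_le_iff]
  constructor
  · exact key_onesided L c A C hA hC u v hu hv t ht x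
  · have h1 := key_onesided L c A C hA hC v u hv hu t ht x
    have hset : {r : ℝ | ∃ y : E, dist x y ≤ t * (A 0 + C (c + A 1 + 1)) ∧ r = |v y - u y|}
        = {r : ℝ | ∃ y : E, dist x y ≤ t * (A 0 + C (c + A 1 + 1)) ∧ r = |u y - v y|} := by
      ext r
      constructor <;> rintro ⟨y, hy, rfl⟩ <;> exact ⟨y, hy, abs_sub_comm _ _⟩
    rwa [hset] at h1

end

/-- Non-expansiveness with respect to localized sup norms: for `u, v` dominated
by `L + c`, `|T⁻ₜ u (x) - T⁻ₜ v (x)|` is at most the sup of `|u - v|` on the closed ball of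
radius `K(c,t) = t * (A 0 + C (c + A 1 + 1))` around `x`, where `A R` bounds `L` on vectors of
norm `≤ R` and `C K` are the superlinearity constants of `L`. -/
theorem laxOleinik_nonexpansive_localized
    {E : Type*} [NormedAddCommGroup E] [NormedSpace ℝ E]
    (L : E → E → ℝ) (c : ℝ) (A C : ℝ → ℝ)
    (hA : ∀ R : ℝ, 0 ≤ R → ∀ x v : E, ‖v‖ ≤ R → L x v ≤ A R)
    (hC : ∀ K : ℝ, 0 ≤ K → ∀ x v : E, K * ‖v‖ - C K ≤ L x v)
    (u v : E → ℝ) (hu : Dominated L c u) (hv : Dominated L c v)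
    (t : ℝ) (ht : 0 < t) (x : E) :
    |laxOleinik L t u x - laxOleinik L t v x| ≤
      sSup {r : ℝ | ∃ y : E, dist x y ≤ t * (A 0 + C (c + A 1 + 1)) ∧ r = |u y - v y|} :=
  laxOleinik_nonexpansive_localized' L c A C hA hC u v hu hv t ht x
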